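/- The Lie subalgebra of the free pre-Lie algebra pL(V) (with commutator bracket of the pre-Lie product) generated by V is isomorphic, as a Lie algebra, to the free Lie algebra on V. -/

import Mathlib

/-- A generic "iterated bracket word" relation: `LieWordRel gen ca cb n a x` means that
`a` and `x` are corresponding combinations of `n` generators under the two bracket
operations `ca` and `cb`. -/
inductive LieWordRel {α β : Type} (gen : α → β → Prop) (ca : α → α → α) (cb : β → β → β) :
    ℕ → α → β → Prop
  | of : ∀ {a x}, gen a x → LieWordRel gen ca cb 1 a x
  | br : ∀ {p a x q b y}, LieWordRel gen ca cb p a x → LieWordRel gen ca cb q b y →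
      LieWordRel gen ca cb (p + q) (ca a b) (cb x y)

noncomputable section PreLieAux

open FreeAlgebra

variable {k V 𝔤 B : Type} [Field k] [CharZero k] [AddCommGroup V] [Module k V]
  [LieRing 𝔤] [LieAlgebra k 𝔤]

namespace PreLieAux
set_option linter.unusedSectionVars false
attribute [local instance] LieRing.ofAssociativeRing LieAlgebra.ofAssociativeAlgebra

variable (k B) in
/-- basis of the free algebra -/
def bA : Module.Basis (FreeMonoid B) k (FreeAlgebra k B) := basisFreeMonoid k B

lemma bA_one : bA k B (1 : FreeMonoid B) = 1 := by
  show equivMonoidAlgebraFreeMonoid.symm (MonoidAlgebra.single 1 1) = _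
  rw [show (MonoidAlgebra.single (1 : FreeMonoid B) (1:k)) =
    (1 : MonoidAlgebra k (FreeMonoid B)) from rfl, map_one]

lemma bA_mul (u w : FreeMonoid B) : bA k B u * bA k B w = bA k B (u * w) := by
  show equivMonoidAlgebraFreeMonoid.symm (MonoidAlgebra.single u 1) *
      equivMonoidAlgebraFreeMonoid.symm (MonoidAlgebra.single w 1) =
      equivMonoidAlgebraFreeMonoid.symm (MonoidAlgebra.single (u*w) 1)
  rw [← map_mul, MonoidAlgebra.single_mul_single, mul_one]

lemma bA_of (i : B) : bA k B (FreeMonoid.of i) = FreeAlgebra.ι k i := by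
  show equivMonoidAlgebraFreeMonoid.symm (MonoidAlgebra.single (FreeMonoid.of i) 1) = _
  rw [show (MonoidAlgebra.single (FreeMonoid.of i) (1:k)) =
    equivMonoidAlgebraFreeMonoid (ι k i) by
      simp [equivMonoidAlgebraFreeMonoid, MonoidAlgebra.of_apply]]
  exact AlgEquiv.symm_apply_apply _ _

variable (b : Module.Basis B k V) (f : V →ₗ[k] 𝔤)

/-- linear structure map `V → FreeAlgebra k B` -/
def iA : V →ₗ[k] FreeAlgebra k B := b.constr k (FreeAlgebra.ι k)

/-- an endomorphism of `𝔤 × k` encoding both `ad x` and `x` -/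
def Tend (x : 𝔤) : Module.End k (𝔤 × k) where
  toFun p := (⁅x, p.1⁆ + p.2 • x, 0)
  map_add' p q := by
    simp only [Prod.fst_add, Prod.snd_add, lie_add, add_smul, Prod.mk_add_mk, add_zero]
    rw [Prod.mk.injEq]
    constructor
    · abel
    · rfl
  map_smul' c p := by
    simp only [Prod.smul_fst, Prod.smul_snd, lie_smul, RingHom.id_apply, Prod.smul_mk,
      smul_add, smul_zero, smul_smul, smul_eq_mul, mul_zero]

/-- `β' : A → End (𝔤 × k)` -/
def betaE : FreeAlgebra k B →ₐ[k] Module.End k (𝔤 × k) :=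
  FreeAlgebra.lift k fun i => Tend (f (b i))

/-- `β : A → End 𝔤`, sending a word to the composition of the `ad`s of its letters -/
def beta : FreeAlgebra k B →ₐ[k] Module.End k 𝔤 :=
  FreeAlgebra.lift k fun i => LieAlgebra.ad k 𝔤 (f (b i))

variable (k B) in
/-- the augmentation -/
def eps : FreeAlgebra k B →ₐ[k] k := FreeAlgebra.lift k (fun _ => (0:k))

/-- the unnormalized Dynkin map: a word maps to its right-normed bracketing in `𝔤` -/
def gam : FreeAlgebra k B →ₗ[k] 𝔤 where
  toFun a := (betaE b f a ((0:𝔤), (1:k))).1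
  map_add' x y := by simp
  map_smul' c x := by simp

/-- the normalized (weighted) Dynkin map -/
def Gam : FreeAlgebra k B →ₗ[k] 𝔤 :=
  (bA k B).constr k fun w => ((w.length : k))⁻¹ • gam b f (bA k B w)

variable (k B) in
/-- homogeneous degree-`n` component (as a subspace) -/
def Adeg (n : ℕ) : Submodule k (FreeAlgebra k B) :=
  Submodule.span k ((bA k B) '' {w | w.length = n})

lemma betaE_pair_zero (a : FreeAlgebra k B) (z : 𝔤) :
    betaE b f a (z, 0) = (beta b f a z, 0) := by
  induction a using FreeAlgebra.induction generalizing z with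
  | grade0 r => simp [betaE, beta, Algebra.algebraMap_eq_smul_one]
  | grade1 i => simp [betaE, beta, Tend, LieAlgebra.ad_apply]
  | mul x y hx hy => rw [map_mul, map_mul]; simp [hy, hx]
  | add x y hx hy =>
      rw [map_add, map_add]
      simp only [LinearMap.add_apply, hx, hy, Prod.mk_add_mk, add_zero]

lemma betaE_pair_one (a : FreeAlgebra k B) :
    betaE b f a ((0:𝔤), (1:k)) = (gam b f a, eps k B a) := by
  have hsnd : ∀ a : FreeAlgebra k B, (betaE b f a ((0:𝔤), (1:k))).2 = eps k B a := by
    intro a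
    induction a using FreeAlgebra.induction with
    | grade0 r => simp [betaE, eps, Algebra.algebraMap_eq_smul_one]
    | grade1 i => simp [betaE, eps, Tend]
    | mul x y hx hy =>
        rw [map_mul, map_mul]
        have : betaE b f y ((0:𝔤), (1:k)) = (gam b f y, eps k B y) := by
          exact Prod.ext rfl hy
        simp only [Module.End.mul_apply, this]
        have : ((gam b f y : 𝔤), (eps k B y : k)) = ((gam b f y, (0:k)) : 𝔤 × k)
            + eps k B y • ((0:𝔤), (1:k)) := by simp
        rw [this, map_add, map_smul, betaE_pair_zero]
        simp [hx, mul_comm]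
    | add x y hx hy => rw [map_add, map_add]; simp [hx, hy]
  exact Prod.ext rfl (hsnd a)

lemma gam_mul (a w : FreeAlgebra k B) (hw : eps k B w = 0) :
    gam b f (a * w) = beta b f a (gam b f w) := by
  show (betaE b f (a * w) ((0:𝔤),(1:k))).1 = _
  rw [map_mul]
  simp only [Module.End.mul_apply, betaE_pair_one, hw, betaE_pair_zero]


lemma Gam_basis (w : FreeMonoid B) :
    Gam b f (bA k B w) = ((w.length : k))⁻¹ • gam b f (bA k B w) :=
  Module.Basis.constr_basis _ _ _ _

lemma gam_one : gam b f (1 : FreeAlgebra k B) = 0 := by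
  show (betaE b f 1 ((0:𝔤),(1:k))).1 = 0
  rw [map_one]; rfl

lemma smul_Gam_of_Adeg {n : ℕ} {u : FreeAlgebra k B} (hu : u ∈ Adeg k B n) :
    (n : k) • Gam b f u = gam b f u := by
  induction hu using Submodule.span_induction with
  | mem x hx =>
      obtain ⟨w, hw, rfl⟩ := hx
      simp only [Set.mem_setOf_eq] at hw
      rcases Nat.eq_zero_or_pos n with hn | hn
      · subst hn
        rw [FreeMonoid.length_eq_zero] at hw
        subst hw
        simp [bA_one, gam_one]
      · rw [Gam_basis, hw, smul_smul, mul_inv_cancel₀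
          (Nat.cast_ne_zero.2 hn.ne' : (n:k) ≠ 0), one_smul]
  | zero => simp
  | add x y hx hy ihx ihy => simp only [map_add, smul_add, ihx, ihy]
  | smul c x hx ihx => rw [map_smul, map_smul, smul_comm, ihx]

lemma eps_bA_of_ne_one {w : FreeMonoid B} (hw : w ≠ 1) : eps k B (bA k B w) = 0 := by
  induction w using FreeMonoid.recOn with
  | one => exact absurd rfl hw
  | of_mul a l _ =>
      rw [← bA_mul, bA_of, map_mul]
      simp [eps]

lemma eps_of_Adeg {n : ℕ} (hn : 1 ≤ n) {u : FreeAlgebra k B} (hu : u ∈ Adeg k B n) :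
    eps k B u = 0 := by
  induction hu using Submodule.span_induction with
  | mem x hx =>
      obtain ⟨w, hw, rfl⟩ := hx
      apply eps_bA_of_ne_one
      intro h1
      rw [h1] at hw
      simp only [Set.mem_setOf_eq] at hw
      rw [show (1 : FreeMonoid B).length = 0 from rfl] at hw
      omega
  | zero => simp
  | add x y hx hy ihx ihy => simp [ihx, ihy]
  | smul c x hx ihx => simp [ihx]

lemma Adeg_mul {p q : ℕ} {u w : FreeAlgebra k B} (hu : u ∈ Adeg k B p)
    (hw : w ∈ Adeg k B q) : u * w ∈ Adeg k B (p + q) := by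
  induction hu using Submodule.span_induction with
  | mem x hx =>
      obtain ⟨wu, hwu, rfl⟩ := hx
      induction hw using Submodule.span_induction with
      | mem y hy =>
          obtain ⟨ww, hww, rfl⟩ := hy
          simp only [Set.mem_setOf_eq] at hwu hww
          rw [bA_mul]
          exact Submodule.subset_span ⟨wu * ww, by
            simp only [Set.mem_setOf_eq, FreeMonoid.length_mul, hwu, hww], rfl⟩
      | zero => simp
      | add x y hx hy ihx ihy => rw [mul_add]; exact Submodule.add_mem _ ihx ihy
      | smul c x hx ihx => rw [mul_smul_comm]; exact Submodule.smul_mem _ _ ihx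
  | zero => simp
  | add x y hx hy ihx ihy => rw [add_mul]; exact Submodule.add_mem _ ihx ihy
  | smul c x hx ihx => rw [smul_mul_assoc]; exact Submodule.smul_mem _ _ ihx

lemma iA_basis (i : B) : iA b (b i) = FreeAlgebra.ι k i := Module.Basis.constr_basis _ _ _ _

lemma iA_mem_Adeg_one (v : V) : iA b v ∈ Adeg k B 1 := by
  have : iA b v ∈ Submodule.span k (Set.range (FreeAlgebra.ι k (X := B))) := by
    rw [iA, Module.Basis.constr_apply]
    exact Submodule.sum_mem _ fun i _ => Submodule.smul_mem _ _
      (Submodule.subset_span (Set.mem_range_self i))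
  refine Submodule.span_le.2 ?_ this
  rintro x ⟨i, rfl⟩
  exact Submodule.subset_span ⟨FreeMonoid.of i, rfl, bA_of i⟩

lemma beta_iA (v : V) : beta b f (iA b v) = LieAlgebra.ad k 𝔤 (f v) := by
  have : beta b f ∘ₗ iA b = (LieAlgebra.ad k 𝔤).toLinearMap ∘ₗ f := by
    apply b.ext
    intro i
    simp [iA_basis, beta, FreeAlgebra.lift_ι_apply]
  simpa using LinearMap.congr_fun this v

lemma gam_iA (v : V) : gam b f (iA b v) = f v := by
  have : gam b f ∘ₗ iA b = f := by
    apply b.ext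
    intro i
    show gam b f (iA b (b i)) = f (b i)
    rw [iA_basis]
    show (betaE b f (FreeAlgebra.ι k i) ((0:𝔤),(1:k))).1 = f (b i)
    rw [betaE, FreeAlgebra.lift_ι_apply]
    simp [Tend]
  simpa using LinearMap.congr_fun this v


/-- the generating relation: pairs `(iA v, f v)` -/
def genRel : FreeAlgebra k B → 𝔤 → Prop := fun a x => ∃ v : V, a = iA b v ∧ x = f v

lemma main_inv {n : ℕ} {a : FreeAlgebra k B} {x : 𝔤}
    (h : LieWordRel (genRel b f) (fun a c => a * c - c * a) (fun x y => ⁅x, y⁆) n a x) :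
    a ∈ Adeg k B n ∧ beta b f a = LieAlgebra.ad k 𝔤 x ∧ gam b f a = (n : k) • x ∧ 1 ≤ n := by
  induction h with
  | of hgen =>
      obtain ⟨v, rfl, rfl⟩ := hgen
      exact ⟨iA_mem_Adeg_one b v, beta_iA b f v, by rw [gam_iA, Nat.cast_one, one_smul],
        le_refl 1⟩
  | @br p u x q c y hp hq ihp ihq =>
      obtain ⟨hAp, hbp, hgp, hnp⟩ := ihp
      obtain ⟨hAq, hbq, hgq, hnq⟩ := ihq
      have hea : eps k B u = 0 := eps_of_Adeg hnp hAp
      have hec : eps k B c = 0 := eps_of_Adeg hnq hAq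
      refine ⟨?_, ?_, ?_, by omega⟩
      · exact Submodule.sub_mem _ (Adeg_mul hAp hAq)
          (by rw [add_comm]; exact Adeg_mul hAq hAp)
      · rw [map_sub, map_mul, map_mul, hbp, hbq]
        have h1 : LieAlgebra.ad k 𝔤 ⁅x, y⁆ =
            ⁅LieAlgebra.ad k 𝔤 x, LieAlgebra.ad k 𝔤 y⁆ := LieHom.map_lie _ _ _
        rw [h1, Ring.lie_def]
      · rw [map_sub, gam_mul b f u c hec, gam_mul b f c u hea, hbp, hbq, hgp, hgq]
        simp only [LieAlgebra.ad_apply, lie_smul]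
        rw [← lie_skew y x]
        push_cast
        module

/-- the span of all certified Lie pairs -/
def Spair : Submodule k (FreeAlgebra k B × 𝔤) :=
  Submodule.span k {pr | ∃ n, LieWordRel (genRel b f)
    (fun a c => a * c - c * a) (fun x y => ⁅x, y⁆) n pr.1 pr.2}

lemma Spair_gen (v : V) : (iA b v, f v) ∈ Spair b f :=
  Submodule.subset_span ⟨1, LieWordRel.of ⟨v, rfl, rfl⟩⟩

lemma Spair_graph {pr : FreeAlgebra k B × 𝔤} (h : pr ∈ Spair b f) : Gam b f pr.1 = pr.2 := by
  induction h using Submodule.span_induction with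
  | mem pr hpr =>
      obtain ⟨n, hn⟩ := hpr
      obtain ⟨hA, -, hg, hn1⟩ := main_inv (b := b) (f := f) hn
      have h1 := smul_Gam_of_Adeg b f hA
      rw [hg] at h1
      exact smul_right_injective 𝔤 (Nat.cast_ne_zero.2 (by omega) : (n : k) ≠ 0) h1
  | zero => simp
  | add x y hx hy ihx ihy => simp only [Prod.fst_add, Prod.snd_add, map_add, ihx, ihy]
  | smul c x hx ihx => simp only [Prod.smul_fst, Prod.smul_snd, map_smul, ihx]

lemma Spair_br : ∀ pr1 ∈ Spair b f, ∀ pr2 ∈ Spair b f,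
    (pr1.1 * pr2.1 - pr2.1 * pr1.1, ⁅pr1.2, pr2.2⁆) ∈ Spair b f := by
  have key : ∀ (u w : FreeAlgebra k B × 𝔤), ∀ (c : k),
      (u.1 * (c • w).1 - (c • w).1 * u.1, ⁅u.2, (c • w).2⁆) =
      c • (u.1 * w.1 - w.1 * u.1, ⁅u.2, w.2⁆) := by
    intro u w c
    simp only [Prod.smul_fst, Prod.smul_snd, Prod.smul_mk, mul_smul_comm, smul_mul_assoc,
      lie_smul, smul_sub]
  have keyadd : ∀ (u w₁ w₂ : FreeAlgebra k B × 𝔤),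
      (u.1 * (w₁ + w₂).1 - (w₁ + w₂).1 * u.1, ⁅u.2, (w₁ + w₂).2⁆) =
      (u.1 * w₁.1 - w₁.1 * u.1, ⁅u.2, w₁.2⁆) + (u.1 * w₂.1 - w₂.1 * u.1, ⁅u.2, w₂.2⁆) := by
    intro u w₁ w₂
    simp only [Prod.fst_add, Prod.snd_add, Prod.mk_add_mk, mul_add, add_mul, lie_add]
    rw [Prod.mk.injEq]
    exact ⟨by abel, rfl⟩
  intro pr1 h1
  induction h1 using Submodule.span_induction with
  | mem p hp =>
      intro pr2 h2
      induction h2 using Submodule.span_induction with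
      | mem q hq =>
          obtain ⟨n, hn⟩ := hp
          obtain ⟨m, hm⟩ := hq
          exact Submodule.subset_span ⟨n + m, LieWordRel.br hn hm⟩
      | zero =>
          simp only [Prod.fst_zero, Prod.snd_zero, mul_zero, zero_mul, sub_zero, lie_zero]
          exact Submodule.zero_mem _
      | add x y hx hy ihx ihy => rw [keyadd]; exact Submodule.add_mem _ ihx ihy
      | smul c x hx ihx => rw [key]; exact Submodule.smul_mem _ _ ihx
  | zero =>
      intro pr2 h2
      simp only [Prod.fst_zero, Prod.snd_zero, zero_mul, mul_zero, sub_zero, zero_lie]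
      exact Submodule.zero_mem _
  | add x y hx hy ihx ihy =>
      intro pr2 h2
      have h := Submodule.add_mem _ (ihx pr2 h2) (ihy pr2 h2)
      have e : ((x + y).1 * pr2.1 - pr2.1 * (x + y).1, ⁅(x + y).2, pr2.2⁆) =
          (x.1 * pr2.1 - pr2.1 * x.1, ⁅x.2, pr2.2⁆) +
          (y.1 * pr2.1 - pr2.1 * y.1, ⁅y.2, pr2.2⁆) := by
        simp only [Prod.fst_add, Prod.snd_add, Prod.mk_add_mk, mul_add, add_mul, add_lie]
        rw [Prod.mk.injEq]
        exact ⟨by abel, rfl⟩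
      rw [e]; exact h
  | smul c x hx ihx =>
      intro pr2 h2
      have e : ((c • x).1 * pr2.1 - pr2.1 * (c • x).1, ⁅(c • x).2, pr2.2⁆) =
          c • (x.1 * pr2.1 - pr2.1 * x.1, ⁅x.2, pr2.2⁆) := by
        simp only [Prod.smul_fst, Prod.smul_snd, Prod.smul_mk, mul_smul_comm, smul_mul_assoc,
          smul_lie, smul_sub]
      rw [e]; exact Submodule.smul_mem _ _ (ihx pr2 h2)

end PreLieAux
end PreLieAux

/-- The universal property of the free pre-Lie algebra on a vector space `V`:
`P` with pre-Lie product `mul` and structure map `ι` is free if every linear map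
from `V` to a pre-Lie algebra extends uniquely to a product-preserving linear map. -/
structure IsFreePreLie (k : Type) [Field k] (V : Type) [AddCommGroup V] [Module k V]
    (P : Type) [AddCommGroup P] [Module k P]
    (mul : P →ₗ[k] P →ₗ[k] P) (ι : V →ₗ[k] P) : Prop where
  preLie : ∀ x y z : P,
    mul (mul x y) z - mul x (mul y z) = mul (mul x z) y - mul x (mul z y)
  lift : ∀ (Q : Type) [AddCommGroup Q] [Module k Q] (m : Q →ₗ[k] Q →ₗ[k] Q),
    (∀ x y z : Q, m (m x y) z - m x (m y z) = m (m x z) y - m x (m z y)) →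
    ∀ f : V →ₗ[k] Q, ∃! g : P →ₗ[k] Q,
      (∀ v, g (ι v) = f v) ∧ ∀ x y, g (mul x y) = m (g x) (g y)

/-- The Lie subalgebra (as a subspace) generated by the image of `ι`, for the
commutator bracket of `mul`. -/
def lieClosure {k : Type} [Field k] {V : Type} [AddCommGroup V] [Module k V]
    {P : Type} [AddCommGroup P] [Module k P]
    (mul : P →ₗ[k] P →ₗ[k] P) (ι : V →ₗ[k] P) : Submodule k P :=
  sInf {W : Submodule k P |
    (∀ v : V, ι v ∈ W) ∧ ∀ x ∈ W, ∀ y ∈ W, mul x y - mul y x ∈ W}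

set_option maxHeartbeats 1000000 in
/-- The Lie subalgebra of the free pre-Lie algebra `pL(V)` (commutator bracket)
generated by `V` is isomorphic, as a Lie algebra, to the free Lie algebra on `V`:
it satisfies the universal property of the free Lie algebra on the vector space
`V`. -/
theorem lie_elements_free_lie {k V P : Type} [Field k] [CharZero k]
    [AddCommGroup V] [Module k V] [AddCommGroup P] [Module k P]
    (mul : P →ₗ[k] P →ₗ[k] P) (ι : V →ₗ[k] P)
    (h : IsFreePreLie k V P mul ι) :
    ∀ (𝔤 : Type) [LieRing 𝔤] [LieAlgebra k 𝔤] (f : V →ₗ[k] 𝔤),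
      ∃! g : (lieClosure mul ι) →ₗ[k] 𝔤,
        (∀ (v : V) (hv : ι v ∈ lieClosure mul ι), g ⟨ι v, hv⟩ = f v) ∧
        ∀ (x y : lieClosure mul ι)
          (hxy : mul (x : P) (y : P) - mul (y : P) (x : P) ∈ lieClosure mul ι),
          g ⟨mul (x : P) (y : P) - mul (y : P) (x : P), hxy⟩ = ⁅g x, g y⁆ := by
  intro 𝔤 _ _ f
  classical
  -- facts about the Lie closure
  have hLmem : ∀ v : V, ι v ∈ lieClosure mul ι := fun v =>
    Submodule.mem_sInf.2 fun W hW => hW.1 v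
  have hLcomm : ∀ x ∈ lieClosure mul ι, ∀ y ∈ lieClosure mul ι,
      mul x y - mul y x ∈ lieClosure mul ι := fun x hx y hy =>
    Submodule.mem_sInf.2 fun W hW =>
      hW.2 x (Submodule.mem_sInf.1 hx W hW) y (Submodule.mem_sInf.1 hy W hW)
  -- a basis of V
  obtain ⟨B, b⟩ := (Module.Free.exists_basis (R := k) (M := V)).some
  -- the free (tensor) algebra as a pre-Lie algebra
  let m : FreeAlgebra k B →ₗ[k] FreeAlgebra k B →ₗ[k] FreeAlgebra k B :=
    LinearMap.mul k (FreeAlgebra k B)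
  have hassoc : ∀ x y z : FreeAlgebra k B,
      m (m x y) z - m x (m y z) = m (m x z) y - m x (m z y) := by
    intro x y z
    simp only [m, LinearMap.mul_apply', mul_assoc, sub_self]
  obtain ⟨g₀, ⟨hg₀ι, hg₀mul⟩, -⟩ := h.lift (FreeAlgebra k B) m hassoc (PreLieAux.iA b)
  have hg₀mul' : ∀ x y : P, g₀ (mul x y) = g₀ x * g₀ y := fun x y => by
    rw [hg₀mul]; rfl
  -- the candidate map
  have key : ∀ z ∈ lieClosure mul ι,
      (g₀ z, PreLieAux.Gam b f (g₀ z)) ∈ PreLieAux.Spair b f := by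
    intro z hz
    have hle : lieClosure mul ι ≤ Submodule.comap
        (LinearMap.prod g₀ ((PreLieAux.Gam b f).comp g₀)) (PreLieAux.Spair b f) := by
      apply sInf_le
      constructor
      · intro v
        have h1 : g₀ (ι v) = PreLieAux.iA b v := hg₀ι v
        have h2' := PreLieAux.Spair_graph b f (PreLieAux.Spair_gen b f v)
        have h2 : PreLieAux.Gam b f (PreLieAux.iA b v) = f v := h2'
        simp only [Submodule.mem_comap, LinearMap.prod_apply, Function.prod_apply, LinearMap.comp_apply,
          h1, h2]
        exact PreLieAux.Spair_gen b f v
      · intro x hx y hy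
        simp only [Submodule.mem_comap, LinearMap.prod_apply, Function.prod_apply,
          LinearMap.comp_apply] at hx hy ⊢
        have hbr' := PreLieAux.Spair_br b f _ hx _ hy
        have hbr : (g₀ x * g₀ y - g₀ y * g₀ x,
            ⁅PreLieAux.Gam b f (g₀ x), PreLieAux.Gam b f (g₀ y)⁆) ∈ PreLieAux.Spair b f := hbr'
        have hfst : g₀ (mul x y - mul y x) = g₀ x * g₀ y - g₀ y * g₀ x := by
          rw [map_sub, hg₀mul', hg₀mul']
        rw [hfst]
        have hsnd' := PreLieAux.Spair_graph b f hbr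
        have hsnd : PreLieAux.Gam b f (g₀ x * g₀ y - g₀ y * g₀ x) =
            ⁅PreLieAux.Gam b f (g₀ x), PreLieAux.Gam b f (g₀ y)⁆ := hsnd'
        rw [hsnd]
        exact hbr
    have h4 := hle hz
    simp only [Submodule.mem_comap, LinearMap.prod_apply, Function.prod_apply,
      LinearMap.comp_apply] at h4
    exact h4
  have hgen : ∀ (v : V) (hv : ι v ∈ lieClosure mul ι),
      (((PreLieAux.Gam b f).comp g₀).comp (lieClosure mul ι).subtype) ⟨ι v, hv⟩ = f v := by
    intro v hv
    show PreLieAux.Gam b f (g₀ (ι v)) = f v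
    rw [hg₀ι]
    have h2' := PreLieAux.Spair_graph b f (PreLieAux.Spair_gen b f v)
    exact h2'
  have hbrk : ∀ (x y : lieClosure mul ι)
      (hxy : mul (x : P) (y : P) - mul (y : P) (x : P) ∈ lieClosure mul ι),
      (((PreLieAux.Gam b f).comp g₀).comp (lieClosure mul ι).subtype)
          ⟨mul (x : P) (y : P) - mul (y : P) (x : P), hxy⟩ =
        ⁅(((PreLieAux.Gam b f).comp g₀).comp (lieClosure mul ι).subtype) x,
         (((PreLieAux.Gam b f).comp g₀).comp (lieClosure mul ι).subtype) y⁆ := by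
    intro x y hxy
    show PreLieAux.Gam b f (g₀ (mul (x : P) (y : P) - mul (y : P) (x : P))) =
      ⁅PreLieAux.Gam b f (g₀ x), PreLieAux.Gam b f (g₀ y)⁆
    have hbr' := PreLieAux.Spair_br b f _ (key _ x.2) _ (key _ y.2)
    have hbr : (g₀ (x : P) * g₀ (y : P) - g₀ (y : P) * g₀ (x : P),
        ⁅PreLieAux.Gam b f (g₀ (x : P)), PreLieAux.Gam b f (g₀ (y : P))⁆) ∈
        PreLieAux.Spair b f := hbr'
    have hfst : g₀ (mul (x : P) (y : P) - mul (y : P) (x : P)) =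
        g₀ (x : P) * g₀ (y : P) - g₀ (y : P) * g₀ (x : P) := by
      rw [map_sub, hg₀mul', hg₀mul']
    rw [hfst]
    have h5 := PreLieAux.Spair_graph b f hbr
    exact h5
  refine ⟨((PreLieAux.Gam b f).comp g₀).comp (lieClosure mul ι).subtype, ⟨hgen, hbrk⟩, ?_⟩
  -- uniqueness
  rintro g' ⟨h1, h2⟩
  set g := ((PreLieAux.Gam b f).comp g₀).comp (lieClosure mul ι).subtype with hg
  have hle : lieClosure mul ι ≤
      Submodule.map (lieClosure mul ι).subtype (LinearMap.ker (g' - g)) := by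
    apply sInf_le
    constructor
    · intro v
      have hmem : (⟨ι v, hLmem v⟩ : lieClosure mul ι) ∈ LinearMap.ker (g' - g) := by
        rw [LinearMap.mem_ker, LinearMap.sub_apply, h1 v (hLmem v), hgen v (hLmem v)]
        exact sub_self _
      exact Submodule.mem_map_of_mem hmem
    · rintro x hx y hy
      obtain ⟨x', hx', rfl⟩ := hx
      obtain ⟨y', hy', rfl⟩ := hy
      have hgx : g' x' = g x' := by
        rw [← sub_eq_zero, ← LinearMap.sub_apply]
        exact LinearMap.mem_ker.1 hx'
      have hgy : g' y' = g y' := by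
        rw [← sub_eq_zero, ← LinearMap.sub_apply]
        exact LinearMap.mem_ker.1 hy'
      have hc : mul (x' : P) (y' : P) - mul (y' : P) (x' : P) ∈ lieClosure mul ι :=
        hLcomm _ x'.2 _ y'.2
      have hmem : (⟨mul (x' : P) (y' : P) - mul (y' : P) (x' : P), hc⟩ : lieClosure mul ι) ∈
          LinearMap.ker (g' - g) := by
        rw [LinearMap.mem_ker, LinearMap.sub_apply, h2 x' y' hc, hbrk x' y' hc, hgx, hgy]
        exact sub_self _
      exact Submodule.mem_map_of_mem hmem
    
  apply LinearMap.ext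
  rintro ⟨z, hz⟩
  obtain ⟨z', hz', hzz⟩ := hle hz
  have : z' = ⟨z, hz⟩ := Subtype.ext hzz
  subst this
  have := LinearMap.mem_ker.1 hz'
  rw [LinearMap.sub_apply, sub_eq_zero] at this
  exact this
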